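/- Let G be a (3/2)-tough graph on at least three vertices with no 2-factor, and let (A,B) be a biased barrier of G. Then there exists a vertex u ∈ B such that u has a neighbor in at least two distinct components H of G − (A ∪ B) with e(H,B) odd and e(H,B) ≥ 3. -/

import Mathlib

open SimpleGraph

variable {V : Type*}

/-- The number of (ordered) pairs giving edges between `X` and `Y`;
for disjoint `X`, `Y` this is the number of edges between `X` and `Y`. -/
noncomputable def eB (G : SimpleGraph V) (X Y : Set V) : ℕ :=
  Set.ncard {p : V × V | p.1 ∈ X ∧ p.2 ∈ Y ∧ G.Adj p.1 p.2}

/-- The vertex set (in `V`) of a connected component of the induced subgraph on `U`. -/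
def compSupp (G : SimpleGraph V) (U : Set V)
    (C : (G.induce U).ConnectedComponent) : Set V :=
  Subtype.val '' C.supp

/-- `δ(A,B) = 2|A| - 2|B| + ∑_{v ∈ B} d_{G-A}(v) - o(A,B)`, where `o(A,B)` is the
number of components of `G - (A ∪ B)` sending an odd number of edges to `B`. -/
noncomputable def deltaAB (G : SimpleGraph V) (A B : Set V) : ℤ :=
  2 * A.ncard - 2 * B.ncard + eB G B Aᶜ -
    Nat.card {C : (G.induce (A ∪ B)ᶜ).ConnectedComponent //
      Odd (eB G (compSupp G (A ∪ B)ᶜ C) B)}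

/-- A barrier (Tutte pair) of `G`. -/
def IsBarrier (G : SimpleGraph V) (A B : Set V) : Prop :=
  Disjoint A B ∧ deltaAB G A B ≤ -2

/-- A biased barrier: a barrier maximizing `|A|` and, subject to that, minimizing `|B|`. -/
def IsBiasedBarrier (G : SimpleGraph V) (A B : Set V) : Prop :=
  IsBarrier G A B ∧
    ∀ A' B' : Set V, IsBarrier G A' B' →
      A'.ncard ≤ A.ncard ∧ (A'.ncard = A.ncard → B.ncard ≤ B'.ncard)

/-- A `2`-factor is a `2`-regular spanning subgraph. -/
def HasTwoFactor (G : SimpleGraph V) : Prop :=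
  ∃ H : SimpleGraph V, H ≤ G ∧ ∀ v : V, (H.neighborSet v).ncard = 2

/-- The number of components of `G - S`. -/
noncomputable def numComp (G : SimpleGraph V) (S : Set V) : ℕ :=
  Nat.card ((G.induce Sᶜ).ConnectedComponent)

/-- `G` is `t`-tough: every vertex cut `S` satisfies `|S| ≥ t · c(G - S)`. -/
def Tough (t : ℝ) (G : SimpleGraph V) : Prop :=
  ∀ S : Set V, 2 ≤ numComp G S → t * (numComp G S : ℝ) ≤ (S.ncard : ℝ)

/-- The toughness `τ(G) = min_S |S| / c(G - S)` over vertex cuts `S`. -/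
noncomputable def toughness (G : SimpleGraph V) : ℝ :=
  sInf {r : ℝ | ∃ S : Set V, 2 ≤ numComp G S ∧ r = (S.ncard : ℝ) / (numComp G S : ℝ)}

/-- `G` is `k`-connected. -/
def KConnected (k : ℕ) (G : SimpleGraph V) : Prop :=
  k < Nat.card V ∧ ∀ S : Set V, S.ncard < k → (G.induce Sᶜ).Connected

/-- The independence number `α(G)`. -/
noncomputable def indepNum (G : SimpleGraph V) : ℕ :=
  sSup {n : ℕ | ∃ s : Set V, (∀ u ∈ s, ∀ v ∈ s, ¬ G.Adj u v) ∧ s.ncard = n}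

/-- The minimum degree `δ(G)`. -/
noncomputable def minDeg (G : SimpleGraph V) : ℕ :=
  sInf {d : ℕ | ∃ v : V, (G.neighborSet v).ncard = d}

/-- `H` occurs as an induced subgraph of `G`. -/
def IsInducedCopy {W : Type*} (H : SimpleGraph W) (G : SimpleGraph V) : Prop :=
  ∃ f : W ↪ V, ∀ a b : W, G.Adj (f a) (f b) ↔ H.Adj a b

/-- The disjoint union `P_m ∪ k·P_1` of a path on `m` vertices and `k` isolated vertices. -/
def pathUnion (m k : ℕ) : SimpleGraph (Fin m ⊕ Fin k) where
  Adj a b := ∃ i j : Fin m, a = Sum.inl i ∧ b = Sum.inl j ∧ (pathGraph m).Adj i j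
  symm := ⟨by rintro a b ⟨i, j, rfl, rfl, h⟩; exact ⟨j, i, rfl, rfl, h.symm⟩⟩
  loopless := ⟨by
    rintro a ⟨i, j, rfl, hj, h⟩
    obtain rfl := Sum.inl.inj hj
    exact (pathGraph m).loopless.irrefl i h⟩

/-- The join `G ∨ H` of two graphs. -/
def joinG {α β : Type*} (G : SimpleGraph α) (H : SimpleGraph β) :
    SimpleGraph (α ⊕ β) where
  Adj x y :=
    match x, y with
    | Sum.inl a, Sum.inl b => G.Adj a b
    | Sum.inr a, Sum.inr b => H.Adj a b
    | _, _ => True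
  symm := ⟨by rintro (a | a) (b | b) h <;> simp_all <;> exact h.symm⟩
  loopless := ⟨by rintro (a | a) h <;> simp_all⟩

/-- `a` disjoint copies of the complete graph `K_b`. -/
def cliquesG (a b : ℕ) : SimpleGraph (Fin a × Fin b) where
  Adj p q := p.1 = q.1 ∧ p.2 ≠ q.2
  symm := ⟨by rintro p q ⟨h1, h2⟩; exact ⟨h1.symm, h2.symm⟩⟩
  loopless := ⟨by rintro p ⟨_, h⟩; exact h rfl⟩

/-- The graph `H_n`: `K_n ∨ (K̄_{2n+1} ∪ K_{2n+1})` together with a perfect matching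
between the independent part and the clique part. -/
def Hgraph (n : ℕ) :
    SimpleGraph (Fin n ⊕ (Fin (2 * n + 1) ⊕ Fin (2 * n + 1))) where
  Adj x y := x ≠ y ∧
    match x, y with
    | Sum.inl _, _ => True
    | _, Sum.inl _ => True
    | Sum.inr (Sum.inl _), Sum.inr (Sum.inl _) => False
    | Sum.inr (Sum.inr _), Sum.inr (Sum.inr _) => True
    | Sum.inr (Sum.inl i), Sum.inr (Sum.inr j) => i = j
    | Sum.inr (Sum.inr i), Sum.inr (Sum.inl j) => i = j
  symm := ⟨by
    rintro (a | a | a) (b | b | b) ⟨hne, h⟩ <;>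
      exact ⟨Ne.symm hne, by simp_all⟩⟩
  loopless := ⟨by rintro x ⟨hne, _⟩; exact hne rfl⟩


namespace Stmt16Helper


variable {V : Type*}

/-- the pair set underlying `eB`. -/
def pairSet (G : SimpleGraph V) (X Y : Set V) : Set (V × V) :=
  {p : V × V | p.1 ∈ X ∧ p.2 ∈ Y ∧ G.Adj p.1 p.2}

lemma eB_def (G : SimpleGraph V) (X Y : Set V) : eB G X Y = (pairSet G X Y).ncard := rfl

lemma eB_comm (G : SimpleGraph V) (X Y : Set V) : eB G X Y = eB G Y X := by
  rw [eB_def, eB_def, show pairSet G Y X = Prod.swap '' pairSet G X Y from ?_,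
    Set.ncard_image_of_injective _ Prod.swap_injective]
  ext ⟨a, b⟩
  constructor
  · rintro ⟨h1, h2, h3⟩
    exact ⟨(b, a), ⟨h2, h1, h3.symm⟩, rfl⟩
  · rintro ⟨⟨c, d⟩, ⟨h1, h2, h3⟩, h⟩
    cases h
    exact ⟨h2, h1, h3.symm⟩

variable [Fintype V]

lemma eB_mono_right (G : SimpleGraph V) {X Y Y' : Set V} (h : Y ⊆ Y') :
    eB G X Y ≤ eB G X Y' :=
  Set.ncard_le_ncard (fun p hp => ⟨hp.1, h hp.2.1, hp.2.2⟩) (Set.toFinite _)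

lemma eB_union_right (G : SimpleGraph V) {X Y Z : Set V} (h : Disjoint Y Z) :
    eB G X (Y ∪ Z) = eB G X Y + eB G X Z := by
  rw [eB_def, eB_def, eB_def,
    show pairSet G X (Y ∪ Z) = pairSet G X Y ∪ pairSet G X Z from ?_,
    Set.ncard_union_eq ?_ (Set.toFinite _) (Set.toFinite _)]
  · rw [Set.disjoint_left]
    rintro ⟨a, b⟩ ⟨_, hb, _⟩ ⟨_, hb', _⟩
    exact Set.disjoint_left.mp h hb hb'
  · ext ⟨a, b⟩
    simp only [pairSet, Set.mem_setOf_eq, Set.mem_union]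
    tauto

lemma eB_union_left (G : SimpleGraph V) {X Y Z : Set V} (h : Disjoint X Y) :
    eB G (X ∪ Y) Z = eB G X Z + eB G Y Z := by
  rw [eB_comm, eB_union_right G h, eB_comm G Z X, eB_comm G Z Y]

lemma eB_eq_zero (G : SimpleGraph V) {X Y : Set V}
    (h : ∀ x ∈ X, ∀ y ∈ Y, ¬ G.Adj x y) : eB G X Y = 0 := by
  rw [eB_def, Set.ncard_eq_zero (Set.toFinite _)]
  ext ⟨a, b⟩
  simp only [pairSet, Set.mem_setOf_eq, Set.mem_empty_iff_false, iff_false, not_and]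
  exact fun ha hb => h a ha b hb

lemma eB_pos (G : SimpleGraph V) {X Y : Set V} {x y : V}
    (hx : x ∈ X) (hy : y ∈ Y) (hadj : G.Adj x y) : 1 ≤ eB G X Y := by
  rw [eB_def]
  have : (x, y) ∈ pairSet G X Y := ⟨hx, hy, hadj⟩
  have := Set.ncard_pos (s := pairSet G X Y) (Set.toFinite _)
  exact this.mpr ⟨_, ‹(x,y) ∈ _›⟩

lemma eB_biUnion_left (G : SimpleGraph V) {ι : Type*} (s : Finset ι) (f : ι → Set V)
    (hdisj : ∀ i ∈ s, ∀ j ∈ s, i ≠ j → Disjoint (f i) (f j)) (Y : Set V) :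
    eB G (⋃ i ∈ s, f i) Y = ∑ i ∈ s, eB G (f i) Y := by
  classical
  induction s using Finset.induction with
  | empty => simp [eB_eq_zero]
  | insert a s' hns ih =>
    rw [Finset.sum_insert hns, Finset.set_biUnion_insert,
      eB_union_left G ?_, ih ?_]
    · intro i hi j hj hij
      exact hdisj i (Finset.mem_insert_of_mem hi) j (Finset.mem_insert_of_mem hj) hij
    · rw [Set.disjoint_left]
      intro x hx hx'
      rw [Set.mem_iUnion₂] at hx'
      obtain ⟨i, hi, hxi⟩ := hx'
      exact Set.disjoint_left.mp
        (hdisj a (Finset.mem_insert_self a s') i (Finset.mem_insert_of_mem hi)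
          (fun h => hns (h ▸ hi))) hx hxi

/-- counting: two injections with disjoint ranges. -/
lemma card_add_card_le {α β γ : Type*} [Finite γ] (f : α → γ) (g : β → γ)
    (hf : Function.Injective f) (hg : Function.Injective g)
    (hfg : ∀ a b, f a ≠ g b) : Nat.card α + Nat.card β ≤ Nat.card γ := by
  have : Finite α := Finite.of_injective f hf
  have : Finite β := Finite.of_injective g hg
  rw [← Nat.card_sum]
  apply Nat.card_le_card_of_injective (Sum.elim f g)
  rintro (a | a) (b | b) h <;> simp only [Sum.elim_inl, Sum.elim_inr] at h
  · rw [hf h]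
  · exact absurd h (hfg a b)
  · exact absurd h.symm (hfg b a)
  · rw [hg h]

lemma card_subtype_split {α : Type*} [Finite α] (p q : α → Prop) :
    Nat.card {a // p a} = Nat.card {a // p a ∧ q a} + Nat.card {a // p a ∧ ¬ q a} := by
  classical
  rw [← Nat.card_sum]
  apply Nat.card_congr
  exact ((Equiv.sumCompl (fun y : {a // p a} => q y.1)).symm.trans
    (Equiv.sumCongr (Equiv.subtypeSubtypeEquivSubtypeInter p q)
      (Equiv.subtypeSubtypeEquivSubtypeInter p (fun a => ¬ q a))))

lemma odd_mem_of_odd_sum {ι : Type*} {s : Finset ι} {f : ι → ℕ}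
    (h : Odd (∑ i ∈ s, f i)) : ∃ i ∈ s, Odd (f i) := by
  classical
  by_contra hc
  push_neg at hc
  simp only [Nat.not_odd_iff_even] at hc
  have : Even (∑ i ∈ s, f i) := Finset.even_sum f (fun i hi => hc i hi)
  exact (Nat.not_odd_iff_even).mpr this h



variable {V : Type*}

lemma walk_end_mem_closed {W : Type*} {H : SimpleGraph W} {X : Set W}
    (hcl : ∀ x ∈ X, ∀ y, H.Adj x y → y ∈ X) {a b : W} (p : H.Walk a b) (ha : a ∈ X) :
    b ∈ X := by
  induction p with
  | nil => exact ha
  | cons h p ih => exact ih (hcl _ ha _ h)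

section Comp

variable (G : SimpleGraph V) {U : Set V}

lemma mem_compSupp {C : (G.induce U).ConnectedComponent} {v : V} :
    v ∈ compSupp G U C ↔ ∃ h : v ∈ U, (G.induce U).connectedComponentMk ⟨v, h⟩ = C := by
  constructor
  · rintro ⟨a, ha, rfl⟩
    exact ⟨a.2, by rwa [ConnectedComponent.mem_supp_iff] at ha⟩
  · rintro ⟨h, hmk⟩
    exact ⟨⟨v, h⟩, by rwa [ConnectedComponent.mem_supp_iff], rfl⟩

lemma compSupp_subset (C : (G.induce U).ConnectedComponent) : compSupp G U C ⊆ U := by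
  rintro _ ⟨a, _, rfl⟩; exact a.2

lemma mem_compSupp_self {v : V} (hv : v ∈ U) :
    v ∈ compSupp G U ((G.induce U).connectedComponentMk ⟨v, hv⟩) :=
  (mem_compSupp G).mpr ⟨hv, rfl⟩

lemma compSupp_nonempty (C : (G.induce U).ConnectedComponent) :
    (compSupp G U C).Nonempty := by
  obtain ⟨a, ha⟩ := C.exists_rep
  exact ⟨a.1, (mem_compSupp G).mpr ⟨a.2, ha⟩⟩

lemma compSupp_injective : Function.Injective (compSupp G U) := by
  intro C C' h
  apply ConnectedComponent.supp_injective
  apply Subtype.val_injective.image_injective h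

lemma compSupp_disjoint {C C' : (G.induce U).ConnectedComponent} (h : C ≠ C') :
    Disjoint (compSupp G U C) (compSupp G U C') := by
  rw [Set.disjoint_left]
  intro v hv hv'
  rw [mem_compSupp] at hv hv'
  obtain ⟨h1, e1⟩ := hv
  obtain ⟨h2, e2⟩ := hv'
  exact h (e1 ▸ e2 ▸ rfl)

lemma adj_mem_compSupp {C : (G.induce U).ConnectedComponent} {v w : V}
    (hv : v ∈ compSupp G U C) (hw : w ∈ U) (hadj : G.Adj v w) : w ∈ compSupp G U C := by
  rw [mem_compSupp] at hv ⊢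
  obtain ⟨hvU, hmk⟩ := hv
  refine ⟨hw, ?_⟩
  rw [← hmk]
  apply ConnectedComponent.eq.mpr
  exact (Adj.reachable (by exact hadj.symm : (G.induce U).Adj ⟨w, hw⟩ ⟨v, hvU⟩))

lemma compSupp_subset_closed {X : Set V}
    (hcl : ∀ a ∈ X, ∀ y ∈ U, G.Adj a y → y ∈ X) {v : V} (hv : v ∈ U) (hvX : v ∈ X) :
    compSupp G U ((G.induce U).connectedComponentMk ⟨v, hv⟩) ⊆ X := by
  rintro w hw
  rw [mem_compSupp] at hw
  obtain ⟨hwU, hmk⟩ := hw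
  have hr : (G.induce U).Reachable ⟨v, hv⟩ ⟨w, hwU⟩ := ConnectedComponent.eq.mp hmk.symm
  obtain ⟨p⟩ := hr
  have := walk_end_mem_closed (H := G.induce U) (X := Subtype.val ⁻¹' X)
    (fun a ha y hadj => hcl a.1 ha y.1 y.2 hadj) p hvX
  exact this

end Comp

section Ext

variable (G : SimpleGraph V)

/-- `C` has an edge to `x`. -/
def adjTo (U : Set V) (x : V) (C : (G.induce U).ConnectedComponent) : Prop :=
  ∃ v ∈ compSupp G U C, G.Adj x v

def inclHom {U W : Set V} (h : U ⊆ W) : G.induce U →g G.induce W :=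
  ⟨fun a => ⟨a.1, h a.2⟩, fun hadj => hadj⟩

/-- map on components induced by `U ⊆ W`. -/
def extMap {U W : Set V} (h : U ⊆ W) :
    (G.induce U).ConnectedComponent → (G.induce W).ConnectedComponent :=
  ConnectedComponent.map (inclHom G h)

lemma extMap_mk {U W : Set V} (h : U ⊆ W) {v : V} (hv : v ∈ U) :
    extMap G h ((G.induce U).connectedComponentMk ⟨v, hv⟩)
      = (G.induce W).connectedComponentMk ⟨v, h hv⟩ :=
  ConnectedComponent.map_mk _ _

lemma supp_subset_extMap {U W : Set V} (h : U ⊆ W) {C : (G.induce U).ConnectedComponent} :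
    compSupp G U C ⊆ compSupp G W (extMap G h C) := by
  intro v hv
  rw [mem_compSupp] at hv ⊢
  obtain ⟨hvU, rfl⟩ := hv
  exact ⟨h hvU, (extMap_mk G h hvU).symm⟩

variable {U : Set V} {x : V}

lemma supp_extMap_of_not_adj (hx : x ∉ U) {C : (G.induce U).ConnectedComponent}
    (hna : ¬ adjTo G U x C) :
    compSupp G (insert x U) (extMap G (Set.subset_insert x U) C) = compSupp G U C := by
  apply Set.Subset.antisymm ?_ (supp_subset_extMap G _)
  obtain ⟨v, hv⟩ := compSupp_nonempty G C
  rw [mem_compSupp] at hv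
  obtain ⟨hvU, rfl⟩ := hv
  rw [extMap_mk]
  apply compSupp_subset_closed
  · intro a ha y hy hadj
    rcases (Set.mem_insert_iff.mp hy) with rfl | hyU
    · exact absurd ⟨a, ha, hadj.symm⟩ hna
    · exact adj_mem_compSupp G ha hyU hadj
  · exact mem_compSupp_self G hvU

lemma extMap_of_adj (hx : x ∉ U) {C : (G.induce U).ConnectedComponent}
    (ha : adjTo G U x C) :
    extMap G (Set.subset_insert x U) C
      = (G.induce (insert x U)).connectedComponentMk ⟨x, Set.mem_insert x U⟩ := by
  obtain ⟨w, hw, hadj⟩ := ha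
  rw [mem_compSupp] at hw
  obtain ⟨hwU, rfl⟩ := hw
  rw [extMap_mk]
  apply ConnectedComponent.eq.mpr
  exact Adj.reachable (by exact hadj.symm :
    (G.induce (insert x U)).Adj ⟨w, Set.subset_insert x U hwU⟩ ⟨x, Set.mem_insert x U⟩)

lemma supp_compX (hx : x ∉ U) :
    compSupp G (insert x U) ((G.induce (insert x U)).connectedComponentMk
      ⟨x, Set.mem_insert x U⟩)
      = insert x (⋃ C : {C : (G.induce U).ConnectedComponent // adjTo G U x C},
          compSupp G U C.1) := by
  apply Set.Subset.antisymm
  · apply compSupp_subset_closed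
    · intro a ha y hy hadj
      rcases Set.mem_insert_iff.mp hy with rfl | hyU
      · exact Set.mem_insert _ _
      · rcases Set.mem_insert_iff.mp ha with rfl | haU
        · refine Set.mem_insert_iff.mpr (Or.inr ?_)
          refine Set.mem_iUnion.mpr ⟨⟨(G.induce U).connectedComponentMk ⟨y, hyU⟩,
            ⟨y, mem_compSupp_self G hyU, hadj⟩⟩, mem_compSupp_self G hyU⟩
        · refine Set.mem_insert_iff.mpr (Or.inr ?_)
          rw [Set.mem_iUnion] at haU ⊢
          obtain ⟨⟨C, hC⟩, haC⟩ := haU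
          exact ⟨⟨C, hC⟩, adj_mem_compSupp G haC hyU hadj⟩
    · exact Set.mem_insert _ _
  · intro v hv
    rcases Set.mem_insert_iff.mp hv with rfl | hv
    · exact mem_compSupp_self G _
    · rw [Set.mem_iUnion] at hv
      obtain ⟨⟨C, hC⟩, hvC⟩ := hv
      have h1 : v ∈ compSupp G (insert x U) (extMap G (Set.subset_insert x U) C) :=
        supp_subset_extMap G _ hvC
      rwa [extMap_of_adj G hx hC] at h1

lemma exists_preimage (hx : x ∉ U) (C' : (G.induce (insert x U)).ConnectedComponent)
    (hxC' : x ∉ compSupp G (insert x U) C') :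
    ∃ C : (G.induce U).ConnectedComponent, ¬ adjTo G U x C ∧
      extMap G (Set.subset_insert x U) C = C' ∧
      compSupp G U C = compSupp G (insert x U) C' := by
  obtain ⟨v, hv⟩ := compSupp_nonempty G C'
  have hvx : v ≠ x := fun h => hxC' (h ▸ hv)
  rw [mem_compSupp] at hv
  obtain ⟨hvU', rfl⟩ := hv
  have hvU : v ∈ U := (Set.mem_insert_iff.mp hvU').resolve_left hvx
  have e1 : extMap G (Set.subset_insert x U) ((G.induce U).connectedComponentMk ⟨v, hvU⟩)
      = (G.induce (insert x U)).connectedComponentMk ⟨v, hvU'⟩ := by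
    rw [extMap_mk]
  have hna : ¬ adjTo G U x ((G.induce U).connectedComponentMk ⟨v, hvU⟩) := by
    intro hadj
    apply hxC'
    rw [← e1, extMap_of_adj G hx hadj]
    exact mem_compSupp_self G _
  refine ⟨(G.induce U).connectedComponentMk ⟨v, hvU⟩, hna, e1, ?_⟩
  have h2 := supp_extMap_of_not_adj G hx hna
  rw [e1] at h2
  exact h2.symm

end Ext



variable {V : Type*}

lemma comps_card_congr (G : SimpleGraph V) {S T : Set V} (h : S = T) (p : Set V → Prop) :
    Nat.card {C : (G.induce S).ConnectedComponent // p (compSupp G S C)}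
      = Nat.card {C : (G.induce T).ConnectedComponent // p (compSupp G T C)} := by
  subst h; rfl

lemma comps_plain_card_congr (G : SimpleGraph V) {S T : Set V} (h : S = T) :
    Nat.card ((G.induce S).ConnectedComponent)
      = Nat.card ((G.induce T).ConnectedComponent) := by
  subst h; rfl

lemma compSupp_mk_congr (G : SimpleGraph V) {S T : Set V} (h : S = T) {v : V}
    (hv : v ∈ S) (hv' : v ∈ T) :
    compSupp G S ((G.induce S).connectedComponentMk ⟨v, hv⟩)
      = compSupp G T ((G.induce T).connectedComponentMk ⟨v, hv'⟩) := by
  subst h; rfl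

lemma iUnion_compSupp (G : SimpleGraph V) (U : Set V) :
    ⋃ C : (G.induce U).ConnectedComponent, compSupp G U C = U := by
  apply Set.Subset.antisymm
  · intro v hv
    rw [Set.mem_iUnion] at hv
    obtain ⟨C, hC⟩ := hv
    exact hC.elim (fun a ha => ha.2 ▸ a.2)
  · intro v hv
    exact Set.mem_iUnion.mpr ⟨_, ⟨⟨v, hv⟩, ConnectedComponent.mem_supp_iff _ _ |>.mpr rfl, rfl⟩⟩

lemma odd_sum_iff {ι : Type*} [Fintype ι] (f : ι → ℕ) :
    Odd (∑ i, f i) ↔ Odd (Nat.card {i // Odd (f i)}) := by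
  classical
  rw [Nat.odd_iff, Nat.odd_iff, Finset.sum_nat_mod,
    show ∑ i, f i % 2 = ∑ i, (if Odd (f i) then 1 else 0) from ?_, Finset.sum_boole,
    Nat.card_eq_fintype_card, Fintype.card_subtype]
  · norm_num
  · apply Finset.sum_congr rfl
    intro i _
    by_cases h : Odd (f i)
    · simp [h, Nat.odd_iff.mp h]
    · simp [h, Nat.even_iff.mp (Nat.not_odd_iff_even.mp h)]

lemma two_le_card {α : Type*} [Finite α] {x y : α} (h : x ≠ y) : 2 ≤ Nat.card α := by
  have : Nat.card ({x, y} : Set α) ≤ Nat.card α :=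
    Nat.card_le_card_of_injective Subtype.val Subtype.val_injective
  rwa [Nat.card_coe_set_eq, Set.ncard_pair h] at this


section Surgery

variable [Fintype V] {G : SimpleGraph V} {A B : Set V}

lemma surgeryG (hdisj : Disjoint A B) {w : V} (hwU : w ∈ (A ∪ B)ᶜ)
    (hodd : Odd (eB G (compSupp G (A ∪ B)ᶜ
      ((G.induce (A ∪ B)ᶜ).connectedComponentMk ⟨w, hwU⟩)) B))
    (hδ : deltaAB G A B ≤ -2) (hnb : -1 ≤ deltaAB G (insert w A) B) :
    eB G {w} B ≤ 1 := by
  classical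
  have hwAB : w ∉ A ∪ B := hwU
  set U0 : Set V := (A ∪ B)ᶜ \ {w} with hU0def
  have hwU0 : w ∉ U0 := fun h => h.2 rfl
  have hU1 : (A ∪ B)ᶜ = insert w U0 := by
    rw [hU0def, Set.insert_diff_singleton, Set.insert_eq_self.mpr hwU]
  have hset2 : (insert w A ∪ B)ᶜ = U0 := by
    rw [hU0def]
    ext x
    simp only [Set.mem_compl_iff, Set.mem_union, Set.mem_insert_iff, Set.mem_diff,
      Set.mem_singleton_iff]
    tauto
  set U1 : Set V := insert w U0 with hU1def
  have hwU1 : w ∈ U1 := Set.mem_insert w U0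
  -- the component of w
  set H0 : (G.induce U1).ConnectedComponent :=
    (G.induce U1).connectedComponentMk ⟨w, hwU1⟩ with hH0def
  have hoddH0 : Odd (eB G (compSupp G U1 H0) B) := by
    rwa [compSupp_mk_congr G hU1 hwU hwU1] at hodd
  -- card bookkeeping
  set q1 : ℕ := Nat.card {C : (G.induce U1).ConnectedComponent //
    Odd (eB G (compSupp G U1 C) B)} with hq1def
  set q0 : ℕ := Nat.card {C : (G.induce U0).ConnectedComponent //
    Odd (eB G (compSupp G U0 C) B)} with hq0def
  unfold deltaAB at hδ hnb
  rw [comps_card_congr G hU1 (fun s => Odd (eB G s B))] at hδ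
  rw [comps_card_congr G hset2 (fun s => Odd (eB G s B))] at hnb
  rw [← hq1def] at hδ
  rw [← hq0def] at hnb
  -- ncard insert
  have hwA : w ∉ A := fun h => hwAB (Or.inl h)
  have hins : (insert w A).ncard = A.ncard + 1 :=
    Set.ncard_insert_of_notMem hwA (Set.toFinite _)
  -- edge split
  have hwAc : w ∈ Aᶜ := hwA
  have hAc : Aᶜ = (Aᶜ \ {w}) ∪ {w} := by
    ext x
    by_cases hx : x = w
    · subst hx; simp [hwA]
    · simp [hx]
  have hesplit : eB G B Aᶜ = eB G B (Aᶜ \ {w}) + eB G B {w} := by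
    conv_lhs => rw [hAc]
    exact eB_union_right G (by simp [Set.disjoint_left])
  have hcins : (insert w A)ᶜ = Aᶜ \ {w} := by
    ext x
    simp only [Set.mem_compl_iff, Set.mem_insert_iff, Set.mem_diff, Set.mem_singleton_iff]
    tauto
  rw [hcins, hins] at hnb
  rw [hesplit] at hδ
  have key1 : (eB G B {w} : ℤ) + q0 ≤ 1 + q1 := by
    push_cast at hδ hnb ⊢
    linarith
  -- q1 = 1 + r
  set r : ℕ := Nat.card {C : (G.induce U1).ConnectedComponent //
      Odd (eB G (compSupp G U1 C) B) ∧ ¬ C = H0} with hrdef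
  have hq1r : q1 = 1 + r := by
    rw [hq1def, card_subtype_split (fun C => Odd (eB G (compSupp G U1 C) B))
      (fun C => C = H0)]
    congr 1
    rw [Nat.card_eq_one_iff_unique]
    exact ⟨⟨fun a b => Subtype.ext (a.2.2.trans b.2.2.symm)⟩, ⟨⟨H0, hoddH0, rfl⟩⟩⟩
  set P : ℕ := Nat.card {C0 : (G.induce U0).ConnectedComponent //
      adjTo G U0 w C0 ∧ Odd (eB G (compSupp G U0 C0) B)} with hPdef
  have hxC : ∀ C : (G.induce U1).ConnectedComponent, ¬ C = H0 → w ∉ compSupp G U1 C := by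
    intro C hne hmem
    rw [mem_compSupp] at hmem
    obtain ⟨h1, h2⟩ := hmem
    exact hne h2.symm
  have hpre : ∀ C : {C : (G.induce U1).ConnectedComponent //
      Odd (eB G (compSupp G U1 C) B) ∧ ¬ C = H0},
      ∃ C0, ¬ adjTo G U0 w C0 ∧ extMap G (Set.subset_insert w U0) C0 = C.1 ∧
        compSupp G U0 C0 = compSupp G U1 C.1 :=
    fun C => exists_preimage G hwU0 C.1 (hxC C.1 C.2.2)
  choose pre hpre1 hpre2 hpre3 using hpre
  have hrq0 : r + P ≤ q0 := by
    refine card_add_card_le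
      (fun C => (⟨pre C, by rw [hpre3 C]; exact C.2.1⟩ :
        {C0 : (G.induce U0).ConnectedComponent // Odd (eB G (compSupp G U0 C0) B)}))
      (fun z => ⟨z.1, z.2.2⟩) ?_ ?_ ?_
    · intro a b hab
      have h1 : pre a = pre b := congrArg Subtype.val hab
      have h2 : a.1 = b.1 := by rw [← hpre2 a, ← hpre2 b, h1]
      exact Subtype.ext h2
    · intro a b hab
      have h1 := congrArg Subtype.val hab
      exact Subtype.ext h1
    · intro a b hab
      have h1 : pre a = b.1 := congrArg Subtype.val hab
      exact hpre1 a (h1 ▸ b.2.1)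
  -- decompose e(H0, B)
  have hsupp : compSupp G U1 H0 = insert w (⋃ C : {C : (G.induce U0).ConnectedComponent //
      adjTo G U0 w C}, compSupp G U0 C.1) := supp_compX G hwU0
  have hfin : Fintype {C : (G.induce U0).ConnectedComponent // adjTo G U0 w C} :=
    Fintype.ofFinite _
  have hdisjU : Disjoint ({w} : Set V)
      (⋃ C : {C : (G.induce U0).ConnectedComponent // adjTo G U0 w C}, compSupp G U0 C.1) := by
    rw [Set.disjoint_left]
    rintro x hx hx'
    rw [Set.mem_singleton_iff] at hx
    subst hx
    rw [Set.mem_iUnion] at hx'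
    obtain ⟨C, hC⟩ := hx'
    exact hwU0 (compSupp_subset G C.1 hC)
  have hsum : eB G (compSupp G U1 H0) B
      = eB G {w} B + ∑ C : {C : (G.induce U0).ConnectedComponent // adjTo G U0 w C},
          eB G (compSupp G U0 C.1) B := by
    rw [hsupp, Set.insert_eq, eB_union_left G hdisjU]
    congr 1
    rw [show (⋃ C : {C : (G.induce U0).ConnectedComponent // adjTo G U0 w C},
        compSupp G U0 C.1)
      = ⋃ C ∈ (Finset.univ : Finset {C : (G.induce U0).ConnectedComponent // adjTo G U0 w C}),
          compSupp G U0 C.1 from by simp]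
    exact eB_biUnion_left G Finset.univ _
      (fun i _ j _ hij => compSupp_disjoint G (fun h => hij (Subtype.ext h))) B
  -- final contradiction
  by_contra hcon2
  push_neg at hcon2
  have hew : eB G B {w} = eB G {w} B := eB_comm G B {w}
  have hPew : eB G {w} B + P ≤ 2 := by
    have h2 : (eB G {w} B : ℤ) + (r + P) ≤ 1 + (1 + r) := by
      rw [← hew]
      calc (eB G B {w} : ℤ) + (r + P) ≤ (eB G B {w} : ℤ) + q0 := by
            have := hrq0; push_cast; omega
        _ ≤ 1 + q1 := key1
        _ = 1 + (1 + r) := by rw [hq1r]; push_cast; ring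
    push_cast at h2
    omega
  have hP0 : P = 0 ∧ eB G {w} B = 2 := by omega
  have hempty : ∀ C0 : (G.induce U0).ConnectedComponent,
      adjTo G U0 w C0 → ¬ Odd (eB G (compSupp G U0 C0) B) := by
    intro C0 hadj hoddC0
    have : Nat.card {C0 : (G.induce U0).ConnectedComponent //
        adjTo G U0 w C0 ∧ Odd (eB G (compSupp G U0 C0) B)} = 0 := hP0.1
    rcases Nat.card_eq_zero.mp this with h | h
    · exact h.false ⟨C0, hadj, hoddC0⟩
    · exact absurd h (by exact (Finite.of_injective Subtype.val Subtype.val_injective).not_infinite)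
  have heven : Even (∑ C : {C : (G.induce U0).ConnectedComponent // adjTo G U0 w C},
      eB G (compSupp G U0 C.1) B) := by
    apply Finset.even_sum
    intro i _
    exact Nat.not_odd_iff_even.mp (hempty i.1 i.2)
  rw [hsum, hP0.2] at hoddH0
  have : Even (2 + ∑ C : {C : (G.induce U0).ConnectedComponent // adjTo G U0 w C},
      eB G (compSupp G U0 C.1) B) := (even_two).add heven
  exact Nat.not_odd_iff_even.mpr this hoddH0

lemma surgeryL1 (hdisj : Disjoint A B) {u : V} (huB : u ∈ B)
    (hδ : deltaAB G A B ≤ -2) (hnb : -1 ≤ deltaAB G A (B \ {u})) :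
    (∀ u' ∈ B \ {u}, ¬ G.Adj u u') ∧
    (∀ C : (G.induce (A ∪ B)ᶜ).ConnectedComponent,
      eB G {u} (compSupp G (A ∪ B)ᶜ C) ≤ 1) ∧
    (∀ C : (G.induce (A ∪ B)ᶜ).ConnectedComponent, adjTo G (A ∪ B)ᶜ u C →
      Odd (eB G (compSupp G (A ∪ B)ᶜ C) B)) := by
  classical
  set U : Set V := (A ∪ B)ᶜ with hUdef
  have huA : u ∉ A := fun h => Set.disjoint_left.mp hdisj h huB
  have huU : u ∉ U := fun h => h (Or.inr huB)
  have hset : (A ∪ B \ {u})ᶜ = insert u U := by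
    ext x
    simp only [Set.mem_compl_iff, Set.mem_union, Set.mem_diff, Set.mem_singleton_iff,
      hUdef, Set.mem_insert_iff]
    by_cases hx : x = u
    · subst hx; tauto
    · tauto
  set U' : Set V := insert u U with hU'def
  have huU' : u ∈ U' := Set.mem_insert u U
  set Cu : (G.induce U').ConnectedComponent :=
    (G.induce U').connectedComponentMk ⟨u, huU'⟩ with hCudef
  set q : ℕ := Nat.card {C : (G.induce U).ConnectedComponent //
    Odd (eB G (compSupp G U C) B)} with hqdef
  set q' : ℕ := Nat.card {C : (G.induce U').ConnectedComponent //
    Odd (eB G (compSupp G U' C) (B \ {u}))} with hq'def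
  unfold deltaAB at hδ hnb
  rw [comps_card_congr G hset (fun s => Odd (eB G s (B \ {u})))] at hnb
  rw [← hq'def] at hnb
  rw [← hUdef, ← hqdef] at hδ
  have hb1 : 1 ≤ B.ncard := (Set.ncard_pos (Set.toFinite _)).mpr ⟨u, huB⟩
  have hBdiff : (B \ {u}).ncard = B.ncard - 1 :=
    Set.ncard_diff_singleton_of_mem huB
  rw [hBdiff] at hnb
  have hBsplit : eB G B Aᶜ = eB G (B \ {u}) Aᶜ + eB G {u} Aᶜ := by
    conv_lhs => rw [show B = (B \ {u}) ∪ {u} from by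
      rw [Set.diff_union_self, Set.union_eq_self_of_subset_right (by simpa using huB)]]
    exact eB_union_left G (by simp [Set.disjoint_left])
  rw [hBsplit] at hδ
  set D : ℕ := eB G {u} Aᶜ with hDdef
  have key : D + q' ≤ 1 + q := by
    push_cast at hδ hnb
    omega
  -- split q
  set o : ℕ := Nat.card {C : (G.induce U).ConnectedComponent //
    adjTo G U u C ∧ Odd (eB G (compSupp G U C) B)} with hodef
  set r : ℕ := Nat.card {C : (G.induce U).ConnectedComponent //
    Odd (eB G (compSupp G U C) B) ∧ ¬ adjTo G U u C} with hrdef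
  have hqsplit : q = o + r := by
    rw [hqdef, card_subtype_split (fun C => Odd (eB G (compSupp G U C) B))
      (fun C => adjTo G U u C), hrdef, hodef]
    congr 1
    exact Nat.card_congr (Equiv.subtypeEquivRight (fun C => by tauto))
  -- the injection f
  have hsuppf : ∀ C : (G.induce U).ConnectedComponent, ¬ adjTo G U u C →
      compSupp G U' (extMap G (Set.subset_insert u U) C) = compSupp G U C :=
    fun C h => supp_extMap_of_not_adj G huU h
  have hcount : ∀ C : (G.induce U).ConnectedComponent, ¬ adjTo G U u C →
      eB G (compSupp G U C) (B \ {u}) = eB G (compSupp G U C) B := by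
    intro C h
    have : eB G (compSupp G U C) B
        = eB G (compSupp G U C) (B \ {u}) + eB G (compSupp G U C) {u} := by
      conv_lhs => rw [show B = (B \ {u}) ∪ {u} from by
        rw [Set.diff_union_self, Set.union_eq_self_of_subset_right (by simpa using huB)]]
      exact eB_union_right G (by simp [Set.disjoint_left])
    have h0 : eB G (compSupp G U C) {u} = 0 := by
      apply eB_eq_zero
      intro x hx y hy hadj
      rw [Set.mem_singleton_iff] at hy
      subst hy
      exact h ⟨x, hx, hadj.symm⟩
    omega
  have hrq' : ∀ z : {C : (G.induce U).ConnectedComponent //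
      Odd (eB G (compSupp G U C) B) ∧ ¬ adjTo G U u C},
      Odd (eB G (compSupp G U' (extMap G (Set.subset_insert u U) z.1)) (B \ {u})) := by
    intro z
    rw [hsuppf z.1 z.2.2, hcount z.1 z.2.2]
    exact z.2.1
  have hfinj : ∀ z z' : {C : (G.induce U).ConnectedComponent //
      Odd (eB G (compSupp G U C) B) ∧ ¬ adjTo G U u C},
      extMap G (Set.subset_insert u U) z.1 = extMap G (Set.subset_insert u U) z'.1 →
      z = z' := by
    intro z z' h
    apply Subtype.ext
    apply compSupp_injective G
    rw [← hsuppf z.1 z.2.2, ← hsuppf z'.1 z'.2.2, h]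
  -- sums over adjacent components
  have hfinadj : Fintype {C : (G.induce U).ConnectedComponent // adjTo G U u C} :=
    Fintype.ofFinite _
  set t : ℕ := Nat.card {C : (G.induce U).ConnectedComponent // adjTo G U u C} with htdef
  set AdjU : Set V := ⋃ C : {C : (G.induce U).ConnectedComponent // adjTo G U u C},
    compSupp G U C.1 with hAdjUdef
  have hAdjU_sub : AdjU ⊆ U := by
    rw [hAdjUdef]
    intro x hx
    rw [Set.mem_iUnion] at hx
    obtain ⟨C, hC⟩ := hx
    exact compSupp_subset G C.1 hC
  have hdisj_u_AdjU : Disjoint ({u} : Set V) AdjU := by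
    rw [Set.disjoint_left]
    rintro x hx hx'
    rw [Set.mem_singleton_iff] at hx
    subst hx
    exact huU (hAdjU_sub hx')
  have hbiU : ∀ Y : Set V, eB G AdjU Y
      = ∑ C : {C : (G.induce U).ConnectedComponent // adjTo G U u C},
          eB G (compSupp G U C.1) Y := by
    intro Y
    rw [hAdjUdef,
      show (⋃ C : {C : (G.induce U).ConnectedComponent // adjTo G U u C}, compSupp G U C.1)
        = ⋃ C ∈ (Finset.univ : Finset {C : (G.induce U).ConnectedComponent // adjTo G U u C}),
            compSupp G U C.1 from by simp]
    exact eB_biUnion_left G Finset.univ _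
      (fun i _ j _ hij => compSupp_disjoint G (fun h => hij (Subtype.ext h))) Y
  set m : ℕ := eB G {u} (B \ {u}) with hmdef
  -- D = m + ST
  have hAc : Aᶜ = B ∪ U := by
    ext x
    constructor
    · intro hx
      by_cases hxB : x ∈ B
      · exact Or.inl hxB
      · exact Or.inr (fun h => h.elim hx hxB)
    · rintro (hx | hx)
      · exact fun h => Set.disjoint_left.mp hdisj h hx
      · exact fun h => hx (Or.inl h)
  have heuB : eB G {u} B = m := by
    conv_lhs => rw [show B = (B \ {u}) ∪ {u} from by
      rw [Set.diff_union_self, Set.union_eq_self_of_subset_right (by simpa using huB)]]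
    rw [eB_union_right G (by simp [Set.disjoint_left]), hmdef]
    have : eB G {u} {u} = 0 := by
      apply eB_eq_zero
      intro x hx y hy hadj
      rw [Set.mem_singleton_iff] at hx hy
      subst hx; subst hy
      exact G.loopless.irrefl _ hadj
    omega
  have heuU : eB G {u} U = eB G {u} AdjU := by
    have hU2 : U = AdjU ∪ (U \ AdjU) := by
      rw [Set.union_diff_cancel hAdjU_sub]
    conv_lhs => rw [hU2]
    rw [eB_union_right G Set.disjoint_sdiff_right]
    have h0 : eB G {u} (U \ AdjU) = 0 := by
      apply eB_eq_zero
      intro x hx y hy hadj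
      rw [Set.mem_singleton_iff] at hx
      subst hx
      apply hy.2
      rw [hAdjUdef, Set.mem_iUnion]
      have hyU : y ∈ U := hy.1
      refine ⟨⟨(G.induce U).connectedComponentMk ⟨y, hyU⟩, ⟨y, mem_compSupp_self G hyU, hadj⟩⟩,
        mem_compSupp_self G hyU⟩
    omega
  have hD : D = m + eB G AdjU {u} := by
    rw [hDdef, hAc, eB_union_right G (by
      rw [Set.disjoint_left]
      intro x hx hx'
      exact hx' (Or.inr hx)), heuB, heuU, eB_comm G AdjU {u}]
  -- parity of Cu
  have hCusupp : compSupp G U' Cu = insert u AdjU := supp_compX G huU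
  have hCusum : eB G (compSupp G U' Cu) (B \ {u}) = m + eB G AdjU (B \ {u}) := by
    rw [hCusupp, Set.insert_eq, eB_union_left G hdisj_u_AdjU, hmdef]
  have hadj_split : eB G AdjU B = eB G AdjU (B \ {u}) + eB G AdjU {u} := by
    conv_lhs => rw [show B = (B \ {u}) ∪ {u} from by
      rw [Set.diff_union_self, Set.union_eq_self_of_subset_right (by simpa using huB)]]
    exact eB_union_right G (by simp [Set.disjoint_left])
  have hqq : Nat.card {i : {C : (G.induce U).ConnectedComponent // adjTo G U u C} //
      Odd (eB G (compSupp G U i.1) B)} = o := by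
    rw [hodef]
    exact Nat.card_congr (Equiv.subtypeSubtypeEquivSubtypeInter
      (fun C => adjTo G U u C) (fun C => Odd (eB G (compSupp G U C) B)))
  have hSBodd : Odd (eB G AdjU B) ↔ Odd o := by
    rw [hbiU B, odd_sum_iff, hqq]
  have hCu_parity : Odd (eB G (compSupp G U' Cu) (B \ {u})) ↔ Odd (o + D) := by
    rw [Nat.odd_iff, Nat.odd_iff] at hSBodd ⊢
    omega
  -- bound q' from below, in both parity cases, to get D ≤ o
  have hDo : D ≤ o := by
    by_cases hpar : Odd (o + D)
    · have hq'ge : r + Nat.card PUnit.{1} ≤ q' := by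
        rw [hq'def, hrdef]
        refine card_add_card_le
          (fun z : {C : (G.induce U).ConnectedComponent //
              Odd (eB G (compSupp G U C) B) ∧ ¬ adjTo G U u C} =>
            (⟨extMap G (Set.subset_insert u U) z.1, hrq' z⟩ :
              {C' : (G.induce U').ConnectedComponent //
                Odd (eB G (compSupp G U' C') (B \ {u}))}))
          (fun _ : PUnit.{1} => ⟨Cu, hCu_parity.mpr hpar⟩) ?_ ?_ ?_
        · intro a b hab
          exact hfinj a b (congrArg Subtype.val hab)
        · intro a b _
          rfl
        · intro a b hab
          have h1 : extMap G (Set.subset_insert u U) a.1 = Cu := congrArg Subtype.val hab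
          have h2 : u ∈ compSupp G U' Cu := mem_compSupp_self G huU'
          rw [← h1, hsuppf a.1 a.2.2] at h2
          exact huU (compSupp_subset G a.1 h2)
      have hPU : Nat.card PUnit.{1} = 1 := Nat.card_unique
      omega
    · have hq'ge : r ≤ q' := by
        rw [hq'def]
        exact Nat.card_le_card_of_injective
          (fun z : {C : (G.induce U).ConnectedComponent //
              Odd (eB G (compSupp G U C) B) ∧ ¬ adjTo G U u C} =>
            (⟨extMap G (Set.subset_insert u U) z.1, hrq' z⟩ :
              {C' : (G.induce U').ConnectedComponent //
                Odd (eB G (compSupp G U' C') (B \ {u}))}))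
          (fun a b hab => hfinj a b (congrArg Subtype.val hab))
      rw [Nat.not_odd_iff_even, Nat.even_iff] at hpar
      omega
  -- each adjacent component meets u with at least one edge
  have htC1 : ∀ C : {C : (G.induce U).ConnectedComponent // adjTo G U u C},
      1 ≤ eB G (compSupp G U C.1) {u} := by
    rintro ⟨C, v, hv, hadj⟩
    exact eB_pos G hv rfl hadj.symm
  have hST : eB G AdjU {u}
      = ∑ C : {C : (G.induce U).ConnectedComponent // adjTo G U u C},
          eB G (compSupp G U C.1) {u} := hbiU {u}
  have htcard : t = (Finset.univ : Finset {C : (G.induce U).ConnectedComponent //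
      adjTo G U u C}).card := by
    rw [htdef, Nat.card_eq_fintype_card, Fintype.card]
  have hSTt : t ≤ eB G AdjU {u} := by
    rw [hST, htcard]
    calc (Finset.univ : Finset {C : (G.induce U).ConnectedComponent //
        adjTo G U u C}).card
        = ∑ _C : {C : (G.induce U).ConnectedComponent // adjTo G U u C}, 1 := by
          rw [Finset.sum_const, smul_eq_mul, mul_one]
      _ ≤ _ := Finset.sum_le_sum (fun i _ => htC1 i)
  have hot : o ≤ t := by
    rw [hodef, htdef]
    refine Nat.card_le_card_of_injective (fun z => ⟨z.1, z.2.1⟩) ?_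
    intro a b hab
    have h1 := congrArg Subtype.val hab
    exact Subtype.ext h1
  -- m = 0, and each edge count to adjacent comps is exactly 1, and o = t
  have hm0 : m = 0 := by omega
  have hSTeq : eB G AdjU {u} = t := by omega
  have hoteq : o = t := by omega
  refine ⟨?_, ?_, ?_⟩
  · intro u' hu' hadj
    have : 1 ≤ m := hmdef ▸ eB_pos G rfl hu' hadj
    omega
  · intro C
    by_cases hC : adjTo G U u C
    · rw [eB_comm]
      by_contra hge
      push_neg at hge
      have hlt : (Finset.univ : Finset {C : (G.induce U).ConnectedComponent //
          adjTo G U u C}).sum (fun _ => 1)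
          < (Finset.univ : Finset {C : (G.induce U).ConnectedComponent //
          adjTo G U u C}).sum (fun C => eB G (compSupp G U C.1) {u}) := by
        apply Finset.sum_lt_sum (fun i _ => htC1 i)
        exact ⟨⟨C, hC⟩, Finset.mem_univ _, hge⟩
      rw [← hST] at hlt
      rw [Finset.sum_const, smul_eq_mul, mul_one, ← htcard] at hlt
      omega
    · rw [show eB G {u} (compSupp G U C) = 0 from ?_]
      · omega
      apply eB_eq_zero
      intro x hx y hy hadj
      rw [Set.mem_singleton_iff] at hx
      subst hx
      exact hC ⟨y, hy, hadj⟩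
  · intro C hC
    by_contra hnodd
    have hsplit2 : t = Nat.card {C : (G.induce U).ConnectedComponent //
        adjTo G U u C ∧ Odd (eB G (compSupp G U C) B)}
        + Nat.card {C : (G.induce U).ConnectedComponent //
        adjTo G U u C ∧ ¬ Odd (eB G (compSupp G U C) B)} := by
      rw [htdef]
      exact card_subtype_split _ _
    have : 1 ≤ Nat.card {C : (G.induce U).ConnectedComponent //
        adjTo G U u C ∧ ¬ Odd (eB G (compSupp G U C) B)} := by
      haveI : Nonempty {C : (G.induce U).ConnectedComponent //
          adjTo G U u C ∧ ¬ Odd (eB G (compSupp G U C) B)} := ⟨⟨C, hC, hnodd⟩⟩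
      exact Nat.card_pos
    omega

end Surgery

end Stmt16Helper

open Stmt16Helper in
theorem stmt16 {V : Type*} [Fintype V] (G : SimpleGraph V) (A B : Set V)
    (htough : Tough (3 / 2) G) (hn : 3 ≤ Nat.card V)
    (hG : ¬ HasTwoFactor G) (hAB : IsBiasedBarrier G A B) :
    ∃ u ∈ B, 2 ≤ Set.ncard {C : (G.induce (A ∪ B)ᶜ).ConnectedComponent |
      Odd (eB G (compSupp G (A ∪ B)ᶜ C) B) ∧ 3 ≤ eB G (compSupp G (A ∪ B)ᶜ C) B ∧
      ∃ v ∈ compSupp G (A ∪ B)ᶜ C, G.Adj u v} := by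
  classical
  by_contra hcon
  push_neg at hcon
  obtain ⟨⟨hdisj, hδ⟩, hmax⟩ := hAB
  have hδ' := hδ
  unfold deltaAB at hδ'
  set U : Set V := (A ∪ B)ᶜ with hUdef
  -- non-barrier facts
  have hnbB : ∀ u ∈ B, -1 ≤ deltaAB G A (B \ {u}) := by
    intro u hu
    by_contra h
    push_neg at h
    have hbar : IsBarrier G A (B \ {u}) :=
      ⟨hdisj.mono_right Set.diff_subset, by omega⟩
    have h2 := (hmax A (B \ {u}) hbar).2 rfl
    have hb1 : 1 ≤ B.ncard := (Set.ncard_pos (Set.toFinite _)).mpr ⟨u, hu⟩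
    rw [Set.ncard_diff_singleton_of_mem hu] at h2
    omega
  have hnbA : ∀ w ∈ U, -1 ≤ deltaAB G (insert w A) B := by
    intro w hw
    by_contra h
    push_neg at h
    have hwA : w ∉ A := fun hc => hw (Or.inl hc)
    have hwB : w ∉ B := fun hc => hw (Or.inr hc)
    have hbar : IsBarrier G (insert w A) B := by
      refine ⟨?_, by omega⟩
      rw [Set.disjoint_left]
      rintro x hx hx'
      rcases Set.mem_insert_iff.mp hx with rfl | hx
      · exact hwB hx'
      · exact Set.disjoint_left.mp hdisj hx hx'
    have h1 := (hmax _ _ hbar).1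
    rw [Set.ncard_insert_of_notMem hwA (Set.toFinite _)] at h1
    omega
  -- surgery facts
  have hL1 : ∀ u ∈ B,
      (∀ u' ∈ B \ {u}, ¬ G.Adj u u') ∧
      (∀ C : (G.induce U).ConnectedComponent, eB G {u} (compSupp G U C) ≤ 1) ∧
      (∀ C : (G.induce U).ConnectedComponent, adjTo G U u C →
        Odd (eB G (compSupp G U C) B)) :=
    fun u hu => surgeryL1 hdisj hu hδ (hnbB u hu)
  have hSG : ∀ w, ∀ hw : w ∈ U,
      Odd (eB G (compSupp G U ((G.induce U).connectedComponentMk ⟨w, hw⟩)) B) →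
      eB G {w} B ≤ 1 :=
    fun w hw hodd => surgeryG hdisj hw hodd hδ (hnbA w hw)
  -- quantities
  set q : ℕ := Nat.card {C : (G.induce U).ConnectedComponent //
    Odd (eB G (compSupp G U C) B)} with hqdef
  set d3 : ℕ := Nat.card {C : (G.induce U).ConnectedComponent //
    Odd (eB G (compSupp G U C) B) ∧ 3 ≤ eB G (compSupp G U C) B} with hd3def
  set c1 : ℕ := Nat.card {C : (G.induce U).ConnectedComponent //
    Odd (eB G (compSupp G U C) B) ∧ ¬ 3 ≤ eB G (compSupp G U C) B} with hc1def
  have hqsplit : q = d3 + c1 := by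
    rw [hqdef, hd3def, hc1def]
    exact card_subtype_split _ _
  set W3 : Set V := ⋃ C : {C : (G.induce U).ConnectedComponent //
    Odd (eB G (compSupp G U C) B) ∧ 3 ≤ eB G (compSupp G U C) B}, compSupp G U C.1
    with hW3def
  set O1 : Set V := ⋃ C : {C : (G.induce U).ConnectedComponent //
    Odd (eB G (compSupp G U C) B) ∧ ¬ 3 ≤ eB G (compSupp G U C) B}, compSupp G U C.1
    with hO1def
  set E3 : ℕ := eB G W3 B with hE3def
  set E1 : ℕ := eB G O1 B with hE1def
  have hW3U : W3 ⊆ U := by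
    rw [hW3def]
    intro x hx
    rw [Set.mem_iUnion] at hx
    obtain ⟨C, hC⟩ := hx
    exact compSupp_subset G C.1 hC
  have hO1U : O1 ⊆ U := by
    rw [hO1def]
    intro x hx
    rw [Set.mem_iUnion] at hx
    obtain ⟨C, hC⟩ := hx
    exact compSupp_subset G C.1 hC
  have hUAc : U ⊆ Aᶜ := fun x hx h => hx (Or.inl h)
  have hBAc : B ⊆ Aᶜ := fun x hx h => Set.disjoint_left.mp hdisj h hx
  -- δ inequality
  have hFi : 2 * A.ncard + E3 + c1 + 2 ≤ 2 * B.ncard + q := by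
    have hdisj31 : Disjoint W3 O1 := by
      rw [hW3def, hO1def, Set.disjoint_left]
      intro x hx hx'
      rw [Set.mem_iUnion] at hx hx'
      obtain ⟨C, hC⟩ := hx
      obtain ⟨C', hC'⟩ := hx'
      have : C.1 = C'.1 := by
        by_contra hne
        exact Set.disjoint_left.mp (compSupp_disjoint G hne) hC hC'
      exact C'.2.2 (this ▸ C.2.2)
    have hmono : E3 + E1 ≤ eB G B Aᶜ := by
      rw [hE3def, hE1def, ← eB_union_left G hdisj31, eB_comm]
      exact eB_mono_right G (fun x hx => hx.elim (fun h => hUAc (hW3U h))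
        (fun h => hUAc (hO1U h)))
    have hc1E1 : c1 ≤ E1 := by
      have hne : ∀ C : {C : (G.induce U).ConnectedComponent //
          Odd (eB G (compSupp G U C) B) ∧ ¬ 3 ≤ eB G (compSupp G U C) B},
          ∃ p : V × V, p ∈ pairSet G (compSupp G U C.1) B := by
        intro C
        have h1 : eB G (compSupp G U C.1) B ≠ 0 := by
          intro h
          have hodd := C.2.1
          rw [h, Nat.odd_iff] at hodd
          omega
        rw [eB_def] at h1
        obtain ⟨p, hp⟩ := Set.nonempty_of_ncard_ne_zero h1
        exact ⟨p, hp⟩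
      choose pc hpc using hne
      have hinj : Function.Injective (fun C : {C : (G.induce U).ConnectedComponent //
          Odd (eB G (compSupp G U C) B) ∧ ¬ 3 ≤ eB G (compSupp G U C) B} =>
          (⟨pc C, ⟨Set.mem_iUnion.mpr ⟨C, (hpc C).1⟩, (hpc C).2.1,
            (hpc C).2.2⟩⟩ : ↥(pairSet G O1 B))) := by
        intro C C' h
        have h1 : pc C = pc C' := congrArg Subtype.val h
        apply Subtype.ext
        by_contra hne
        exact Set.disjoint_left.mp (compSupp_disjoint G hne) (hpc C).1
          (h1 ▸ (hpc C').1)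
      have := Nat.card_le_card_of_injective _ hinj
      rwa [Nat.card_coe_set_eq, ← eB_def, ← hc1def, ← hE1def] at this
    omega
  have hE3b : E3 ≤ B.ncard := by
    have hmem : ∀ p : ↥(pairSet G W3 B), ∃ C : {C : (G.induce U).ConnectedComponent //
        Odd (eB G (compSupp G U C) B) ∧ 3 ≤ eB G (compSupp G U C) B},
        p.1.1 ∈ compSupp G U C.1 := by
      intro p
      exact Set.mem_iUnion.mp p.2.1
    choose cp hcp using hmem
    have hinj : Function.Injective (fun p : ↥(pairSet G W3 B) =>
        (⟨p.1.2, p.2.2.1⟩ : ↥B)) := by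
      intro p p' h
      have h2 : p.1.2 = p'.1.2 := congrArg Subtype.val h
      have hCeq : cp p = cp p' := by
        by_contra hne
        have hne' : (cp p).1 ≠ (cp p').1 := fun hh => hne (Subtype.ext hh)
        have h2' : 2 ≤ Set.ncard {C : (G.induce U).ConnectedComponent |
            Odd (eB G (compSupp G U C) B) ∧ 3 ≤ eB G (compSupp G U C) B ∧
            ∃ v ∈ compSupp G U C, G.Adj p.1.2 v} := by
          have hsub : ({(cp p).1, (cp p').1} : Set ((G.induce U).ConnectedComponent))
              ⊆ {C : (G.induce U).ConnectedComponent |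
              Odd (eB G (compSupp G U C) B) ∧ 3 ≤ eB G (compSupp G U C) B ∧
              ∃ v ∈ compSupp G U C, G.Adj p.1.2 v} := by
            rintro C (rfl | rfl)
            · exact ⟨(cp p).2.1, (cp p).2.2, p.1.1, hcp p, p.2.2.2.symm⟩
            · refine ⟨(cp p').2.1, (cp p').2.2, p'.1.1, hcp p', ?_⟩
              rw [h2]
              exact p'.2.2.2.symm
          calc 2 = Set.ncard {(cp p).1, (cp p').1} := (Set.ncard_pair hne').symm
            _ ≤ _ := Set.ncard_le_ncard hsub (Set.toFinite _)
        have := hcon p.1.2 p.2.2.1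
        omega
      -- same component: use eB {u} supp ≤ 1
      have hle := (hL1 p.1.2 p.2.2.1).2.1 (cp p).1
      have hmem1 : (p.1.2, p.1.1) ∈ pairSet G {p.1.2} (compSupp G U (cp p).1) :=
        ⟨rfl, hcp p, p.2.2.2.symm⟩
      have hmem2 : (p.1.2, p'.1.1) ∈ pairSet G {p.1.2} (compSupp G U (cp p).1) := by
        refine ⟨rfl, ?_, ?_⟩
        · rw [hCeq]; exact hcp p'
        · rw [h2]; exact p'.2.2.2.symm
      rw [eB_def] at hle
      have := (Set.ncard_le_one (Set.toFinite _)).mp hle _ hmem1 _ hmem2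
      have hfst : p.1.1 = p'.1.1 := congrArg Prod.snd this
      apply Subtype.ext
      exact Prod.ext hfst h2
    have := Nat.card_le_card_of_injective _ hinj
    rwa [Nat.card_coe_set_eq, Nat.card_coe_set_eq, ← eB_def, ← hE3def] at this
  have hBne : B.Nonempty := by
    rw [Set.nonempty_iff_ne_empty]
    intro hB0
    rw [hB0] at hδ
    unfold deltaAB at hδ
    have h1 : eB G ∅ Aᶜ = 0 := eB_eq_zero G (fun x hx => hx.elim)
    have h2 : Nat.card {C : (G.induce (A ∪ ∅)ᶜ).ConnectedComponent //
        Odd (eB G (compSupp G (A ∪ ∅)ᶜ C) ∅)} = 0 := by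
      rw [Nat.card_eq_zero]
      left
      refine ⟨fun C => ?_⟩
      have h3 : eB G (compSupp G (A ∪ ∅)ᶜ C.1) ∅ = 0 :=
        eB_eq_zero G (fun x _ y hy => hy.elim)
      have hodd := C.2
      rw [h3, Nat.odd_iff] at hodd
      omega
    rw [h1, h2] at hδ
    simp at hδ
    omega
  by_cases hb2 : 2 ≤ B.ncard
  · -- main case
    have hpair3 : ∀ C : {C : (G.induce U).ConnectedComponent //
        Odd (eB G (compSupp G U C) B) ∧ 3 ≤ eB G (compSupp G U C) B},
        ∃ p : V × V, p ∈ pairSet G (compSupp G U C.1) B := by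
      intro C
      have h2 := C.2.2
      have h1 : eB G (compSupp G U C.1) B ≠ 0 := by omega
      rw [eB_def] at h1
      obtain ⟨p, hp⟩ := Set.nonempty_of_ncard_ne_zero h1
      exact ⟨p, hp⟩
    choose pc3 hpc3 using hpair3
    set T : Set V := ⋃ C : {C : (G.induce U).ConnectedComponent //
        Odd (eB G (compSupp G U C) B) ∧ 3 ≤ eB G (compSupp G U C) B},
      ({v ∈ compSupp G U C.1 | ∃ u' ∈ B, G.Adj v u'} \ {(pc3 C).1}) with hTdef
    have hTU : T ⊆ U := by
      intro x hx
      obtain ⟨C, hC⟩ := Set.mem_iUnion.mp hx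
      exact compSupp_subset G C.1 hC.1.1
    set S : Set V := A ∪ T with hSdef
    have hdisjAT : Disjoint A T :=
      Set.disjoint_left.mpr (fun x hx hx' => (hTU hx') (Or.inl hx))
    have hSncard : S.ncard = A.ncard + T.ncard :=
      Set.ncard_union_eq hdisjAT (Set.toFinite _) (Set.toFinite _)
    have hTd3 : T.ncard + d3 ≤ E3 := by
      have hmemT : ∀ x : ↥T, ∃ C : {C : (G.induce U).ConnectedComponent //
          Odd (eB G (compSupp G U C) B) ∧ 3 ≤ eB G (compSupp G U C) B},
          x.1 ∈ ({v ∈ compSupp G U C.1 | ∃ u' ∈ B, G.Adj v u'} \ {(pc3 C).1}) :=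
        fun x => Set.mem_iUnion.mp x.2
      choose ct hct using hmemT
      have hmemT2 : ∀ x : ↥T, ∃ u', u' ∈ B ∧ G.Adj x.1 u' := fun x => (hct x).1.2
      choose ut hut1 hut2 using hmemT2
      have hcard : Nat.card ↥T + Nat.card {C : (G.induce U).ConnectedComponent //
          Odd (eB G (compSupp G U C) B) ∧ 3 ≤ eB G (compSupp G U C) B}
          ≤ Nat.card ↥(pairSet G W3 B) := by
        apply card_add_card_le
          (fun x : ↥T => (⟨(x.1, ut x), ⟨Set.mem_iUnion.mpr ⟨ct x, (hct x).1.1⟩,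
            hut1 x, hut2 x⟩⟩ : ↥(pairSet G W3 B)))
          (fun C : {C : (G.induce U).ConnectedComponent //
              Odd (eB G (compSupp G U C) B) ∧ 3 ≤ eB G (compSupp G U C) B} =>
            (⟨pc3 C, ⟨Set.mem_iUnion.mpr ⟨C, (hpc3 C).1⟩, (hpc3 C).2.1,
              (hpc3 C).2.2⟩⟩ : ↥(pairSet G W3 B)))
        · intro x x' h
          have h1 : (x.1, ut x) = (x'.1, ut x') := congrArg Subtype.val h
          exact Subtype.ext (congrArg Prod.fst h1)
        · intro C C' h
          have h1 : pc3 C = pc3 C' := congrArg Subtype.val h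
          apply Subtype.ext
          by_contra hne
          exact Set.disjoint_left.mp (compSupp_disjoint G hne) (hpc3 C).1
            (h1 ▸ (hpc3 C').1)
        · intro x C h
          have h1 : (x.1, ut x) = pc3 C := congrArg Subtype.val h
          have h2 : x.1 = (pc3 C).1 := congrArg Prod.fst h1
          by_cases hcc : ct x = C
          · exact (hct x).2 (by rw [hcc, ← h2]; rfl)
          · refine Set.disjoint_left.mp (compSupp_disjoint G
              (fun hh : (ct x).1 = C.1 => hcc (Subtype.ext hh))) (hct x).1.1 ?_
            rw [h2]
            exact (hpc3 C).1
      rwa [Nat.card_coe_set_eq, Nat.card_coe_set_eq, ← eB_def, ← hE3def,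
        ← hd3def] at hcard
    have hBS : ∀ u ∈ B, u ∈ Sᶜ := fun u hu hc =>
      hc.elim (fun h => Set.disjoint_left.mp hdisj h hu) (fun h => (hTU h) (Or.inr hu))
    have hsupRB : ∀ u, ∀ hu : u ∈ B,
        compSupp G Sᶜ ((G.induce Sᶜ).connectedComponentMk ⟨u, hBS u hu⟩) ⊆
          insert u (⋃ C : {C : (G.induce U).ConnectedComponent //
            ∃ v ∈ compSupp G U C \ T, G.Adj u v}, (compSupp G U C.1 \ T)) := by
      intro u hu
      apply compSupp_subset_closed
      · intro a ha y hy hadj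
        have hyA : y ∉ A := fun h => hy (Or.inl h)
        have hyT : y ∉ T := fun h => hy (Or.inr h)
        have hyBU : y ∈ B ∨ y ∈ U := by
          by_cases hB : y ∈ B
          · exact Or.inl hB
          · exact Or.inr (fun hc => hc.elim hyA hB)
        rcases Set.mem_insert_iff.mp ha with rfl | haU
        · rcases hyBU with hyB | hyU
          · exfalso
            have hyu : y ≠ a := fun h => G.loopless.irrefl a (h ▸ hadj)
            exact (hL1 a hu).1 y ⟨hyB, hyu⟩ hadj
          · exact Set.mem_insert_iff.mpr (Or.inr (Set.mem_iUnion.mpr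
              ⟨⟨(G.induce U).connectedComponentMk ⟨y, hyU⟩,
                ⟨y, ⟨mem_compSupp_self G hyU, hyT⟩, hadj⟩⟩,
              ⟨mem_compSupp_self G hyU, hyT⟩⟩))
        · obtain ⟨C, hC⟩ := Set.mem_iUnion.mp haU
          rcases hyBU with hyB | hyU
          · by_cases hyu : y = u
            · subst hyu
              exact Set.mem_insert _ _
            · exfalso
              obtain ⟨v, hv, huv⟩ := C.2
              have hadjTo : adjTo G U u C.1 := ⟨v, hv.1, huv⟩
              have hodd := (hL1 u hu).2.2 C.1 hadjTo
              by_cases h3 : 3 ≤ eB G (compSupp G U C.1) B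
              · have haW : a ∈ {v ∈ compSupp G U C.1 | ∃ u' ∈ B, G.Adj v u'} :=
                  ⟨hC.1, y, hyB, hadj⟩
                have ha_eq : a = (pc3 ⟨C.1, hodd, h3⟩).1 := by
                  by_contra hne
                  exact hC.2 (Set.mem_iUnion.mpr ⟨⟨C.1, hodd, h3⟩, ⟨haW, hne⟩⟩)
                have hvW : v ∈ {v ∈ compSupp G U C.1 | ∃ u' ∈ B, G.Adj v u'} :=
                  ⟨hv.1, u, hu, huv.symm⟩
                have hv_eq : v = (pc3 ⟨C.1, hodd, h3⟩).1 := by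
                  by_contra hne
                  exact hv.2 (Set.mem_iUnion.mpr ⟨⟨C.1, hodd, h3⟩, ⟨hvW, hne⟩⟩)
                obtain ⟨hh, hmk⟩ := (mem_compSupp G).mp hC.1
                have hodd' : Odd (eB G (compSupp G U
                    ((G.induce U).connectedComponentMk ⟨a, hh⟩)) B) := by
                  rw [hmk]; exact hodd
                have hle := hSG a hh hodd'
                rw [eB_def] at hle
                have hau : G.Adj a u := by
                  rw [ha_eq, ← hv_eq]
                  exact huv.symm
                have hm1 : (a, u) ∈ pairSet G {a} B := ⟨rfl, hu, hau⟩
                have hm2 : (a, y) ∈ pairSet G {a} B := ⟨rfl, hyB, hadj⟩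
                have heq := (Set.ncard_le_one (Set.toFinite _)).mp hle _ hm1 _ hm2
                exact hyu (congrArg Prod.snd heq).symm
              · have h1 : eB G (compSupp G U C.1) B ≤ 1 := by
                  rw [Nat.odd_iff] at hodd
                  omega
                rw [eB_def] at h1
                have hm1 : (v, u) ∈ pairSet G (compSupp G U C.1) B := ⟨hv.1, hu, huv.symm⟩
                have hm2 : (a, y) ∈ pairSet G (compSupp G U C.1) B := ⟨hC.1, hyB, hadj⟩
                have heq := (Set.ncard_le_one (Set.toFinite _)).mp h1 _ hm1 _ hm2
                exact hyu (congrArg Prod.snd heq).symm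
          · exact Set.mem_insert_iff.mpr (Or.inr (Set.mem_iUnion.mpr
              ⟨C, ⟨adj_mem_compSupp G hC.1 hyU hadj, hyT⟩⟩))
      · exact Set.mem_insert u _
    have hinjB : Function.Injective (fun u : ↥B =>
        (G.induce Sᶜ).connectedComponentMk ⟨u.1, hBS u.1 u.2⟩) := by
      intro u u' h
      have h' : (G.induce Sᶜ).connectedComponentMk ⟨u.1, hBS u.1 u.2⟩
          = (G.induce Sᶜ).connectedComponentMk ⟨u'.1, hBS u'.1 u'.2⟩ := h
      have h1 : u'.1 ∈ compSupp G Sᶜ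
          ((G.induce Sᶜ).connectedComponentMk ⟨u.1, hBS u.1 u.2⟩) := by
        rw [h']
        exact mem_compSupp_self G _
      have h2 := hsupRB u.1 u.2 h1
      rcases Set.mem_insert_iff.mp h2 with h3 | h3
      · exact Subtype.ext h3.symm
      · exfalso
        obtain ⟨C, hC⟩ := Set.mem_iUnion.mp h3
        exact (compSupp_subset G C.1 hC.1) (Or.inr u'.2)
    have hbc : B.ncard ≤ numComp G S := by
      have h1 : Nat.card ↥B ≤ Nat.card ((G.induce Sᶜ).ConnectedComponent) :=
        Nat.card_le_card_of_injective _ hinjB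
      rwa [Nat.card_coe_set_eq] at h1
    have hc2 : 2 ≤ numComp G S := le_trans hb2 hbc
    have ht := htough S hc2
    have h3c : 3 * numComp G S ≤ 2 * S.ncard := by
      have h30 : (3 : ℝ) * (numComp G S : ℝ) ≤ 2 * (S.ncard : ℝ) := by linarith
      exact_mod_cast h30
    omega
  · -- B.ncard = 1
    have hb1 : B.ncard = 1 := by
      have : 1 ≤ B.ncard := (Set.ncard_pos (Set.toFinite _)).mpr hBne
      omega
    obtain ⟨u, hBu⟩ := Set.ncard_eq_one.mp hb1
    have huB : u ∈ B := by rw [hBu]; rfl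
    have hfin3 : Fintype {C : (G.induce U).ConnectedComponent //
        Odd (eB G (compSupp G U C) B) ∧ 3 ≤ eB G (compSupp G U C) B} :=
      Fintype.ofFinite _
    have hE33 : 3 * d3 ≤ E3 := by
      have h1 : E3 = ∑ C : {C : (G.induce U).ConnectedComponent //
          Odd (eB G (compSupp G U C) B) ∧ 3 ≤ eB G (compSupp G U C) B},
          eB G (compSupp G U C.1) B := by
        rw [hE3def, hW3def,
          show (⋃ C : {C : (G.induce U).ConnectedComponent //
              Odd (eB G (compSupp G U C) B) ∧ 3 ≤ eB G (compSupp G U C) B},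
              compSupp G U C.1)
            = ⋃ C ∈ (Finset.univ : Finset {C : (G.induce U).ConnectedComponent //
              Odd (eB G (compSupp G U C) B) ∧ 3 ≤ eB G (compSupp G U C) B}),
              compSupp G U C.1 from by simp]
        exact eB_biUnion_left G Finset.univ _
          (fun i _ j _ hij => compSupp_disjoint G (fun h => hij (Subtype.ext h))) B
      rw [h1]
      have h2 := Finset.card_nsmul_le_sum (Finset.univ : Finset
        {C : (G.induce U).ConnectedComponent //
          Odd (eB G (compSupp G U C) B) ∧ 3 ≤ eB G (compSupp G U C) B})
        (fun C => eB G (compSupp G U C.1) B) 3 (fun C _ => C.2.2)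
      rw [smul_eq_mul] at h2
      have h3 : d3 = (Finset.univ : Finset {C : (G.induce U).ConnectedComponent //
          Odd (eB G (compSupp G U C) B) ∧ 3 ≤ eB G (compSupp G U C) B}).card := by
        rw [hd3def, Nat.card_eq_fintype_card, Fintype.card]
      rw [h3]
      omega
    have ha0 : A.ncard = 0 ∧ d3 = 0 ∧ E3 = 0 := by omega
    have hA0 : A = ∅ := (Set.ncard_eq_zero (Set.toFinite _)).mp ha0.1
    have hqe : eB G B Aᶜ ≤ q := by
      have h1 := ha0.1
      omega
    by_cases hq2 : 2 ≤ q
    · have hUB : U = Bᶜ := by rw [hUdef, hA0, Set.empty_union]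
      have h1 : q ≤ Nat.card ((G.induce U).ConnectedComponent) := by
        rw [hqdef]
        exact Nat.card_le_card_of_injective Subtype.val Subtype.val_injective
      have h2 : Nat.card ((G.induce U).ConnectedComponent) = numComp G B :=
        comps_plain_card_congr G hUB
      have hc2 : 2 ≤ numComp G B := by omega
      have ht := htough B hc2
      rw [hb1] at ht
      have h3 : (2 : ℝ) ≤ (numComp G B : ℝ) := by exact_mod_cast hc2
      norm_num at ht
      linarith
    · have hAc_univ : Aᶜ = Set.univ := by rw [hA0, Set.compl_empty]
      have hdeg : eB G {u} Set.univ ≤ 1 := by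
        have h1 : eB G B Aᶜ = eB G {u} Set.univ := by rw [hBu, hAc_univ]
        omega
      by_cases hw : ∃ w, G.Adj u w
      · obtain ⟨w, huw⟩ := hw
        have huwq : ∀ y, G.Adj u y → y = w := by
          intro y hy
          rw [eB_def] at hdeg
          have h1 := (Set.ncard_le_one (Set.toFinite _)).mp hdeg
            (u, y) ⟨rfl, Set.mem_univ y, hy⟩ (u, w) ⟨rfl, Set.mem_univ w, huw⟩
          exact congrArg Prod.snd h1
        have hnuw : u ≠ w := G.ne_of_adj huw
        have huwc : u ∈ ({w} : Set V)ᶜ := by simpa using hnuw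
        have hsuppu : compSupp G ({w} : Set V)ᶜ
            ((G.induce ({w} : Set V)ᶜ).connectedComponentMk ⟨u, huwc⟩) ⊆ {u} := by
          apply compSupp_subset_closed
          · intro a ha y hy hadj
            rw [Set.mem_singleton_iff] at ha
            subst ha
            exact absurd (huwq y hadj) (by simpa using hy)
          · rfl
        have hz : ∃ z, z ∉ ({u, w} : Set V) := by
          by_contra hc
          push_neg at hc
          have h1 : (Set.univ : Set V) ⊆ {u, w} := fun z _ => hc z
          have h2 := Set.ncard_le_ncard h1 (Set.toFinite _)
          rw [Set.ncard_univ, Set.ncard_pair hnuw] at h2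
          omega
        obtain ⟨z, hz⟩ := hz
        have hzw : z ∈ ({w} : Set V)ᶜ := fun h => hz (Or.inr h)
        have hzu : z ≠ u := fun h => hz (Or.inl h)
        have hne : (G.induce ({w} : Set V)ᶜ).connectedComponentMk ⟨u, huwc⟩ ≠
            (G.induce ({w} : Set V)ᶜ).connectedComponentMk ⟨z, hzw⟩ := by
          intro h
          have h1 : z ∈ compSupp G ({w} : Set V)ᶜ
              ((G.induce ({w} : Set V)ᶜ).connectedComponentMk ⟨u, huwc⟩) := by
            rw [h]
            exact mem_compSupp_self G _
          exact hzu (hsuppu h1)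
        have hc2 : 2 ≤ numComp G {w} := two_le_card hne
        have ht := htough {w} hc2
        rw [Set.ncard_singleton] at ht
        have h3 : (2 : ℝ) ≤ (numComp G {w} : ℝ) := by exact_mod_cast hc2
        norm_num at ht
        linarith
      · push_neg at hw
        have hu1 : u ∈ (∅ : Set V)ᶜ := by simp
        have hsuppu : compSupp G ((∅ : Set V)ᶜ)
            ((G.induce ((∅ : Set V)ᶜ)).connectedComponentMk ⟨u, hu1⟩) ⊆ {u} := by
          apply compSupp_subset_closed
          · intro a ha y hy hadj
            rw [Set.mem_singleton_iff] at ha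
            subst ha
            exact absurd hadj (hw y)
          · rfl
        have hz : ∃ z : V, z ≠ u := by
          by_contra hc
          push_neg at hc
          have h1 : (Set.univ : Set V) ⊆ {u} := fun z _ => hc z
          have h2 := Set.ncard_le_ncard h1 (Set.toFinite _)
          rw [Set.ncard_univ, Set.ncard_singleton] at h2
          omega
        obtain ⟨z, hzu⟩ := hz
        have hz1 : z ∈ (∅ : Set V)ᶜ := by simp
        have hne : (G.induce ((∅ : Set V)ᶜ)).connectedComponentMk ⟨u, hu1⟩ ≠
            (G.induce ((∅ : Set V)ᶜ)).connectedComponentMk ⟨z, hz1⟩ := by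
          intro h
          have h1 : z ∈ compSupp G ((∅ : Set V)ᶜ)
              ((G.induce ((∅ : Set V)ᶜ)).connectedComponentMk ⟨u, hu1⟩) := by
            rw [h]
            exact mem_compSupp_self G _
          exact hzu (hsuppu h1)
        have hc2 : 2 ≤ numComp G ∅ := two_le_card hne
        have ht := htough ∅ hc2
        rw [Set.ncard_empty] at ht
        have h3 : (2 : ℝ) ≤ (numComp G ∅ : ℝ) := by exact_mod_cast hc2
        norm_num at ht
        linarith
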